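/- The function w₁(τ) = 2(ε+r)τ / (sqrt((a+s+τc)² + 4τb(ε+r)) + (a+s+τc)) is strictly increasing on [0,∞), assuming ε + r > 0. -/

import Mathlib

theorem stmt_3 (a s c b r ε : ℝ) (has : 0 < a + s) (hb : 0 < b) (hc : 0 ≤ c)
    (hr : 0 ≤ r) (hε : 0 ≤ ε) (hre : 0 < ε + r) (G w₁ : ℝ → ℝ)
    (hG : ∀ τ, G τ = Real.sqrt ((a + s + τ * c) ^ 2 + 4 * τ * b * (ε + r)) + (a + s + τ * c))
    (hw : ∀ τ, w₁ τ = 2 * (ε + r) * τ / G τ) :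
    StrictMonoOn w₁ (Set.Ici (0 : ℝ)) := by
  have key : ∀ τ : ℝ, 0 ≤ τ →
      b * w₁ τ ^ 2 + (a + s + τ * c) * w₁ τ = τ * (ε + r) ∧ 0 ≤ w₁ τ ∧ (0 < τ → 0 < w₁ τ) := by
    intro τ hτ
    have hP : 0 < a + s + τ * c := by nlinarith
    have hQ : 0 ≤ (a + s + τ * c) ^ 2 + 4 * τ * b * (ε + r) := by
      nlinarith [mul_nonneg hτ (mul_nonneg hb.le hre.le), sq_nonneg (a + s + τ * c)]
    set S := Real.sqrt ((a + s + τ * c) ^ 2 + 4 * τ * b * (ε + r)) with hSdef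
    have hS2 : S ^ 2 = (a + s + τ * c) ^ 2 + 4 * τ * b * (ε + r) := Real.sq_sqrt hQ
    have hSnn : 0 ≤ S := Real.sqrt_nonneg _
    have hGτ : G τ = S + (a + s + τ * c) := hG τ
    have hGpos : 0 < G τ := by rw [hGτ]; linarith
    have hwτ : w₁ τ = 2 * (ε + r) * τ / (S + (a + s + τ * c)) := by rw [hw τ, hGτ]
    have hGne : S + (a + s + τ * c) ≠ 0 := by positivity
    refine ⟨?_, ?_, ?_⟩
    · rw [hwτ]
      field_simp
      linear_combination (-τ) * hS2
    · rw [hwτ]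
      positivity
    · intro hτpos
      rw [hwτ]
      positivity
  intro x hx y hy hxy
  obtain ⟨ex, hx0, _⟩ := key x hx
  obtain ⟨ey, hy0, hy1⟩ := key y hy
  have hypos : 0 < w₁ y := hy1 (lt_of_le_of_lt hx hxy)
  by_contra h
  push_neg at h
  have hx' : (0:ℝ) ≤ x := hx
  have hylt : (0:ℝ) < y := lt_of_le_of_lt hx' hxy
  have h1 : (y - x) * (ε + r) ≤ c * (y - x) * w₁ y := by
    nlinarith [mul_nonneg (mul_nonneg hb.le (sub_nonneg.2 h)) (add_nonneg hx0 hy0),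
      mul_nonneg has.le (sub_nonneg.2 h),
      mul_nonneg (mul_nonneg hc hx') (sub_nonneg.2 h)]
  have h2 : c * w₁ y < ε + r := by
    nlinarith [mul_pos hb (mul_pos hypos hypos), mul_pos has hypos]
  nlinarith [mul_pos (sub_pos.2 hxy) (sub_pos.2 h2)]
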